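/- arXiv:2002.03830 — 3 statements merged into one kernel-verified Lean document; each statement's English description precedes it below -/
import Mathlib

section
/- If the linear integral operator f ↦ (g ↦ ∫_G Ψ(g, g̃) f(g̃) dμ(g̃)) on L²(G) is equivariant with respect to the left regular representation (i.e., mapping L_ḡ[f] to L_ḡ[output] for all ḡ and all f), and Ψ is continuous, then Ψ satisfies Ψ(ḡg, ḡg̃) = Ψ(g, g̃) for all ḡ, g, g̃ ∈ G, so the operator is a group convolution with kernel ψ(u) = Ψ(e, u). -/
open MeasureTheory Set

/-- If a continuous function integrates to zero against every continuous compactly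
supported function, then it vanishes (w.r.t. a measure positive on opens, finite on
compacts). -/
lemma aux_vanish {G : Type*} [TopologicalSpace G] [RegularSpace G] [LocallyCompactSpace G]
    [MeasurableSpace G] [BorelSpace G]
    (μ : Measure G) [μ.IsOpenPosMeasure] [IsFiniteMeasureOnCompacts μ]
    (h : G → ℝ) (hc : Continuous h)
    (hint : ∀ f : G → ℝ, Continuous f → HasCompactSupport f → (∫ u, h u * f u ∂μ) = 0) :
    ∀ x, h x = 0 := by
  -- first, the case of a point where `h` would be positive leads to a contradiction
  have key : ∀ (h : G → ℝ), Continuous h →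
      (∀ f : G → ℝ, Continuous f → HasCompactSupport f → (∫ u, h u * f u ∂μ) = 0) →
      ∀ x, ¬ (0 < h x) := by
    intro h hc hint x hx
    set U : Set G := {u | 0 < h u} with hU
    have hUopen : IsOpen U := isOpen_lt continuous_const hc
    obtain ⟨f, hf1, hf0, hfsupp, hficc⟩ :=
      exists_continuous_one_zero_of_isCompact (isCompact_singleton (x := x))
        hUopen.isClosed_compl (by simpa [hU] using hx)
    have hfc : Continuous f := f.continuous
    have hnonneg : ∀ u, 0 ≤ h u * f u := by
      intro u
      by_cases hu : u ∈ U
      · exact mul_nonneg (le_of_lt hu) (hficc u).1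
      · rw [hf0 hu]; simp
    have hintegrable : Integrable (fun u => h u * f u) μ :=
      (hc.mul hfc).integrable_of_hasCompactSupport (hfsupp.mul_left)
    have hzero : (∫ u, h u * f u ∂μ) = 0 := hint f hfc hfsupp
    -- but the integral is positive since the integrand is positive near x
    have hpos : 0 < ∫ u, h u * f u ∂μ := by
      rw [integral_pos_iff_support_of_nonneg hnonneg hintegrable]
      have hsub : U ∩ f ⁻¹' (Ioi 0) ⊆ Function.support fun u => h u * f u := by
        intro u ⟨hu1, hu2⟩
        exact ne_of_gt (mul_pos hu1 hu2)
      have hopen : IsOpen (U ∩ f ⁻¹' (Ioi 0)) :=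
        hUopen.inter (isOpen_Ioi.preimage hfc)
      have hmem : x ∈ U ∩ f ⁻¹' (Ioi 0) := by
        refine ⟨hx, ?_⟩
        have : f x = 1 := hf1 rfl
        simp [Set.mem_preimage, this]
      calc (0 : ENNReal) < μ (U ∩ f ⁻¹' (Ioi 0)) :=
            hopen.measure_pos μ ⟨x, hmem⟩
        _ ≤ μ (Function.support fun u => h u * f u) := measure_mono hsub
    rw [hzero] at hpos
    exact lt_irrefl 0 hpos
  intro x
  rcases lt_trichotomy (h x) 0 with hlt | heq | hgt
  · exfalso
    refine key (fun u => -(h u)) hc.neg ?_ x (by simpa using hlt)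
    intro f hfc hfsupp
    have := hint f hfc hfsupp
    simp only [neg_mul]
    rw [integral_neg, this, neg_zero]
  · exact heq
  · exact absurd hgt (key h hc hint x)

/-- If the linear integral operator `T[f](g) = ∫ Ψ(g,gt) f(gt) dμ(gt)` on `L²(G)`
is equivariant w.r.t. the left regular representation (`T[L_gbar f] = L_gbar[T f]`),
and `Ψ` is continuous, then `Ψ(gbarg, gbargt) = Ψ(g, gt)` for all `gbar, g, gt`, so `T`
is a group convolution with kernel `ψ(u) = Ψ(e,u)`. -/
theorem equivariant_linear_operator_is_group_conv {G : Type*} [Group G]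
    [TopologicalSpace G] [IsTopologicalGroup G] [LocallyCompactSpace G]
    [MeasurableSpace G] [BorelSpace G]
    (μ : Measure G) [μ.IsHaarMeasure]
    (Ψ : G × G → ℝ) (hΨ : Continuous Ψ)
    (hT : ∀ f : G → ℝ, MemLp f 2 μ → ∀ gbar g : G,
      (∫ gt, Ψ (g, gt) * f (gbar⁻¹ * gt) ∂μ) = ∫ gt, Ψ (gbar⁻¹ * g, gt) * f gt ∂μ) :
    ∀ gbar g gt : G, Ψ (gbar * g, gbar * gt) = Ψ (g, gt) := by
  intro gbar g gt
  -- the key function which vanishes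
  set h : G → ℝ := fun u => Ψ (gbar * g, gbar * u) - Ψ (g, u) with hdef
  have hc : Continuous h := by
    apply Continuous.sub
    · exact hΨ.comp (by fun_prop)
    · exact hΨ.comp (by fun_prop)
  have hvanish : ∀ x, h x = 0 := by
    apply aux_vanish μ h hc
    intro f hfc hfsupp
    have hmem : MemLp f 2 μ := hfc.memLp_of_hasCompactSupport hfsupp
    have heq := hT f hmem gbar (gbar * g)
    -- change of variables in the LHS
    have hcov : (∫ x, Ψ (gbar * g, x) * f (gbar⁻¹ * x) ∂μ)
        = ∫ u, Ψ (gbar * g, gbar * u) * f u ∂μ := by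
      rw [← integral_mul_left_eq_self (fun x => Ψ (gbar * g, x) * f (gbar⁻¹ * x)) gbar]
      simp [mul_assoc]
    rw [hcov, inv_mul_cancel_left] at heq
    have hi1 : Integrable (fun u => Ψ (gbar * g, gbar * u) * f u) μ := by
      apply Continuous.integrable_of_hasCompactSupport
      · exact (hΨ.comp (by fun_prop)).mul hfc
      · exact hfsupp.mul_left
    have hi2 : Integrable (fun u => Ψ (g, u) * f u) μ := by
      apply Continuous.integrable_of_hasCompactSupport
      · exact (hΨ.comp (by fun_prop)).mul hfc
      · exact hfsupp.mul_left
    calc (∫ u, h u * f u ∂μ)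
        = ∫ u, Ψ (gbar * g, gbar * u) * f u - Ψ (g, u) * f u ∂μ := by
          simp [hdef, sub_mul]
      _ = (∫ u, Ψ (gbar * g, gbar * u) * f u ∂μ) - ∫ u, Ψ (g, u) * f u ∂μ :=
          integral_sub hi1 hi2
      _ = 0 := by rw [heq]; ring
  have := hvanish gt
  simpa [hdef, sub_eq_zero] using this
end

section
/- The attentive group convolution 𝔄[f](g) = ∫_G 𝒜[f](g, g̃) ψ(g⁻¹g̃) f(g̃) dμ(g̃) is equivariant (𝔄[L_ḡ f] = L_ḡ[𝔄 f] for all ḡ ∈ G and all f) if the attention operator 𝒜 satisfies the constraint 𝒜[L_ḡ f](g, g̃) = 𝒜[f](ḡ⁻¹g, ḡ⁻¹g̃) for all ḡ, g, g̃ ∈ G. -/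
open MeasureTheory

/-- The attentive group convolution
`𝔄[f](g) = ∫ 𝒜[f](g,gt) ψ(g⁻¹gt) f(gt) dμ(gt)` is equivariant
(`𝔄[L_gbar f] = L_gbar[𝔄 f]`) if the attention operator satisfies the constraint
`𝒜[L_gbar f](g, gt) = 𝒜[f](gbar⁻¹g, gbar⁻¹gt)`. -/
theorem attentive_group_conv_equivariant_of_constraint {G : Type*} [Group G]
    [TopologicalSpace G] [IsTopologicalGroup G] [LocallyCompactSpace G]
    [MeasurableSpace G] [BorelSpace G]
    (μ : Measure G) [μ.IsMulLeftInvariant]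
    (ψ : G → ℝ) (hψm : Measurable ψ) (Cψ : ℝ) (hψb : ∀ u, |ψ u| ≤ Cψ)
    (A : (G → ℝ) → G → G → ℝ)
    (hA01 : ∀ f g gt, A f g gt ∈ Set.Icc (0 : ℝ) 1)
    (hconstraint : ∀ (f : G → ℝ) (gbar g gt : G),
      A (fun x => f (gbar⁻¹ * x)) g gt = A f (gbar⁻¹ * g) (gbar⁻¹ * gt))
    (hint : ∀ (f : G → ℝ) (g : G),
      Integrable (fun gt => A f g gt * ψ (g⁻¹ * gt) * f gt) μ) :
    ∀ (f : G → ℝ) (gbar g : G),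
      (∫ gt, A (fun x => f (gbar⁻¹ * x)) g gt * ψ (g⁻¹ * gt) * f (gbar⁻¹ * gt) ∂μ)
        = ∫ gt, A f (gbar⁻¹ * g) gt * ψ ((gbar⁻¹ * g)⁻¹ * gt) * f gt ∂μ := by
  intro f gbar g
  have h : ∀ gt : G,
      A (fun x => f (gbar⁻¹ * x)) g gt * ψ (g⁻¹ * gt) * f (gbar⁻¹ * gt)
        = A f (gbar⁻¹ * g) (gbar⁻¹ * gt) * ψ ((gbar⁻¹ * g)⁻¹ * (gbar⁻¹ * gt))
            * f (gbar⁻¹ * gt) := by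
    intro gt
    rw [hconstraint]
    congr 2
    group
  simp_rw [h]
  exact integral_mul_left_eq_self
    (fun u => A f (gbar⁻¹ * g) u * ψ ((gbar⁻¹ * g)⁻¹ * u) * f u) gbar⁻¹
end

section
/- Suppose the attention map generated by 𝒜 is invariant in its first argument, i.e., 𝒜[f](g, g̃) = 𝒜[f](e, g̃) for all g, g̃ and all f, and define 𝒜'[f](g̃) := 𝒜[f](e, g̃). Then 𝒜 satisfies the equivariance constraint 𝒜[L_ḡ f](g, g̃) = 𝒜[f](ḡ⁻¹g, ḡ⁻¹g̃) for all ḡ, g, g̃ if and only if 𝒜' is an equivariant operator: 𝒜'[L_ḡ f] = L_ḡ[𝒜'[f]] for all ḡ ∈ G and all f. -/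
/-- For an attention operator `𝒜` that is invariant in its first argument
(`𝒜[f](g, gt) = 𝒜[f](e, gt)`), with `𝒜'[f](gt) := 𝒜[f](e, gt)`, the equivariance
constraint `𝒜[L_gbar f](g, gt) = 𝒜[f](gbar⁻¹g, gbar⁻¹gt)` holds for all `gbar, g, gt` if and
only if `𝒜'` is an equivariant operator: `𝒜'[L_gbar f] = L_gbar[𝒜'[f]]`. -/
theorem first_argument_invariant_attention_constraint_iff_equivariant
    {G : Type*} [Group G] (A : (G → ℝ) → G → G → ℝ)
    (hinv : ∀ (f : G → ℝ) (g gt : G), A f g gt = A f 1 gt) :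
    (∀ (f : G → ℝ) (gbar g gt : G),
      A (fun x => f (gbar⁻¹ * x)) g gt = A f (gbar⁻¹ * g) (gbar⁻¹ * gt)) ↔
    (∀ (f : G → ℝ) (gbar gt : G),
      A (fun x => f (gbar⁻¹ * x)) 1 gt = A f 1 (gbar⁻¹ * gt)) := by
  constructor
  · intro h f gbar gt
    rw [h f gbar 1 gt, hinv]
  · intro h f gbar g gt
    rw [hinv, h f gbar gt, hinv f (gbar⁻¹ * g)]
end
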